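/- For every α ∈ (0, ∞) and every M ∈ (0, 1], the minimum of t ↦ Φ(t, αt) over t ∈ [M, 1] is attained at an endpoint: min_{t ∈ [M,1]} Φ(t, αt) = min(Φ(M, αM), Φ(1, α)). -/

import Mathlib

/-- The function `Φ : [0,1] × (0,∞) → ℝ` from the paper, extended by the given
formulas to all of `ℝ × ℝ`. -/
noncomputable def Phi (μ ρ : ℝ) : ℝ :=
  if μ = 0 then -1 / (1 + ρ) else (1 / μ) * Real.log (1 - μ / (1 + ρ))

namespace PhiEndpointAux

/-- The function `t ↦ Φ(t, α t)` for `t > 0`, written explicitly. -/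
noncomputable def f (α t : ℝ) : ℝ :=
  (Real.log (1 + (α - 1) * t) - Real.log (1 + α * t)) / t

/-- `q α t = t * h'(t) - h(t)` where `h(t) = log(1+(α-1)t) - log(1+αt)`;
its sign is the sign of `f'`. -/
noncomputable def q (α t : ℝ) : ℝ :=
  t * ((α - 1) / (1 + (α - 1) * t) - α / (1 + α * t))
    - (Real.log (1 + (α - 1) * t) - Real.log (1 + α * t))

lemma Bpos {α t : ℝ} (hα : 0 < α) (ht0 : 0 ≤ t) (ht1 : t ≤ 1) :
    0 < 1 + (α - 1) * t := by nlinarith [mul_nonneg hα.le ht0]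

lemma Apos {α t : ℝ} (hα : 0 < α) (ht0 : 0 ≤ t) : 0 < 1 + α * t := by nlinarith

lemma q_zero (α : ℝ) : q α 0 = 0 := by simp [q]

/-- Value of `Phi` on the relevant set. -/
lemma phi_eq {α t : ℝ} (hα : 0 < α) (ht0 : 0 < t) (ht1 : t ≤ 1) :
    Phi t (α * t) = f α t := by
  have hB : 0 < 1 + (α - 1) * t := Bpos hα ht0.le ht1
  have hA : 0 < 1 + α * t := Apos hα ht0.le
  have h1 : (1 : ℝ) - t / (1 + α * t) = (1 + (α - 1) * t) / (1 + α * t) := by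
    field_simp; ring
  rw [Phi, if_neg ht0.ne', f, h1, Real.log_div hB.ne' hA.ne']
  ring

lemma hasDerivAt_q {α t : ℝ} (hα : 0 < α) (ht0 : 0 < t) (ht1 : t < 1) :
    HasDerivAt (q α)
      (t * (α ^ 2 / (1 + α * t) ^ 2 - (α - 1) ^ 2 / (1 + (α - 1) * t) ^ 2)) t := by
  have hB : 0 < 1 + (α - 1) * t := Bpos hα ht0.le ht1.le
  have hA : 0 < 1 + α * t := Apos hα ht0.le
  have hBd : HasDerivAt (fun s : ℝ => 1 + (α - 1) * s) (α - 1) t := by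
    simpa using ((hasDerivAt_id t).const_mul (α - 1)).const_add 1
  have hAd : HasDerivAt (fun s : ℝ => 1 + α * s) α t := by
    simpa using ((hasDerivAt_id t).const_mul α).const_add 1
  have h1 : HasDerivAt (fun s : ℝ => (α - 1) / (1 + (α - 1) * s))
      ((0 * (1 + (α - 1) * t) - (α - 1) * (α - 1)) / (1 + (α - 1) * t) ^ 2) t :=
    (hasDerivAt_const t (α - 1)).div hBd hB.ne'
  have h2 : HasDerivAt (fun s : ℝ => α / (1 + α * s))
      ((0 * (1 + α * t) - α * α) / (1 + α * t) ^ 2) t :=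
    (hasDerivAt_const t α).div hAd hA.ne'
  have hlogB : HasDerivAt (fun s : ℝ => Real.log (1 + (α - 1) * s))
      ((α - 1) / (1 + (α - 1) * t)) t := hBd.log hB.ne'
  have hlogA : HasDerivAt (fun s : ℝ => Real.log (1 + α * s))
      (α / (1 + α * t)) t := hAd.log hA.ne'
  have hmain := ((hasDerivAt_id t).mul (h1.sub h2)).sub (hlogB.sub hlogA)
  refine hmain.congr_deriv ?_
  have hBne : (1 + (α - 1) * t) ≠ 0 := hB.ne'
  have hAne : (1 + α * t) ≠ 0 := hA.ne'
  simp only [id_eq, Pi.sub_apply]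
  field_simp
  ring

lemma continuousOn_q {α : ℝ} (hα : 0 < α) : ContinuousOn (q α) (Set.Icc 0 1) := by
  have hBne : ∀ t ∈ Set.Icc (0:ℝ) 1, 1 + (α - 1) * t ≠ 0 := fun t ht =>
    (Bpos hα ht.1 ht.2).ne'
  have hAne : ∀ t ∈ Set.Icc (0:ℝ) 1, 1 + α * t ≠ 0 := fun t ht =>
    (Apos hα ht.1).ne'
  have hBc : ContinuousOn (fun t : ℝ => 1 + (α - 1) * t) (Set.Icc 0 1) :=
    (continuous_const.add (continuous_const.mul continuous_id)).continuousOn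
  have hAc : ContinuousOn (fun t : ℝ => 1 + α * t) (Set.Icc 0 1) :=
    (continuous_const.add (continuous_const.mul continuous_id)).continuousOn
  exact (continuousOn_id.mul
      ((continuousOn_const.div hBc hBne).sub (continuousOn_const.div hAc hAne))).sub
    ((hBc.log hBne).sub (hAc.log hAne))

/-- The derivative of `q` is positive where `r t := (2α-1) + 2α(α-1)t` is positive. -/
lemma deriv_q_eq_sign {α t : ℝ} (hα : 0 < α) (ht0 : 0 < t) (ht1 : t < 1) :
    t * (α ^ 2 / (1 + α * t) ^ 2 - (α - 1) ^ 2 / (1 + (α - 1) * t) ^ 2)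
      = t * ((2 * α - 1) + 2 * α * (α - 1) * t)
        / ((1 + α * t) ^ 2 * (1 + (α - 1) * t) ^ 2) := by
  have hB : 0 < 1 + (α - 1) * t := Bpos hα ht0.le ht1.le
  have hA : 0 < 1 + α * t := Apos hα ht0.le
  have hBne : (1 + (α - 1) * t) ≠ 0 := hB.ne'
  have hAne : (1 + α * t) ≠ 0 := hA.ne'
  have htne : t ≠ 0 := ht0.ne'
  rw [div_sub_div _ _ (by positivity : ((1:ℝ) + α * t) ^ 2 ≠ 0)
    (by positivity : ((1:ℝ) + (α - 1) * t) ^ 2 ≠ 0), mul_div_assoc]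
  congr 2
  ring

/-- Sign pattern of the linear function `r`. -/
lemma r_sign {α : ℝ} (hα : 0 < α) :
    ∃ θ ∈ Set.Icc (0:ℝ) 1,
      (∀ t, 0 < t → t < θ → 0 < (2 * α - 1) + 2 * α * (α - 1) * t) ∧
      (∀ t, θ < t → t < 1 → (2 * α - 1) + 2 * α * (α - 1) * t < 0) := by
  rcases le_or_gt 1 α with hα1 | hα1
  · refine ⟨1, by constructor <;> norm_num, fun t ht0 ht1 => ?_, fun t ht hti => by linarith⟩
    have h1 : (0:ℝ) ≤ 2 * α * (α - 1) * t :=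
      mul_nonneg (mul_nonneg (by linarith) (by linarith)) ht0.le
    linarith
  · -- α < 1, set τ the root
    have hs : 0 < 2 * α * (1 - α) := by nlinarith
    set τ : ℝ := (2 * α - 1) / (2 * α * (1 - α)) with hτ
    refine ⟨max 0 (min τ 1), ⟨le_max_left _ _, max_le (by norm_num) (min_le_right _ _)⟩,
      ?_, ?_⟩
    · intro t ht0 htθ
      have h1 : t < min τ 1 := lt_of_lt_of_le htθ (by
        rcases le_or_gt (min τ 1) 0 with h | h
        · linarith [lt_of_lt_of_le htθ (max_le le_rfl h)]
        · exact le_of_eq (max_eq_right h.le))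
      have h2 : t < τ := lt_of_lt_of_le h1 (min_le_left _ _)
      have h3 : t * (2 * α * (1 - α)) < 2 * α - 1 := (lt_div_iff₀ hs).mp h2
      nlinarith
    · intro t htθ ht1
      have h1 : min τ 1 < t := lt_of_le_of_lt (le_max_right _ _) htθ
      rcases le_or_gt τ 1 with h | h
      · have h2 : τ < t := by rwa [min_eq_left h] at h1
        have h3 : 2 * α - 1 < t * (2 * α * (1 - α)) := (div_lt_iff₀ hs).mp h2
        nlinarith
      · rw [min_eq_right h.le] at h1; linarith

lemma q_sign {α : ℝ} (hα : 0 < α) :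
    ∃ d ∈ Set.Icc (0:ℝ) 1,
      (∀ t, 0 < t → t ≤ d → 0 ≤ q α t) ∧ (∀ t, d < t → t ≤ 1 → q α t ≤ 0) := by
  obtain ⟨θ, hθ, hrpos, hrneg⟩ := r_sign hα
  have hc : ContinuousOn (q α) (Set.Icc 0 1) := continuousOn_q hα
  -- q is strictly monotone on [0, θ]
  have hmono : StrictMonoOn (q α) (Set.Icc 0 θ) := by
    apply strictMonoOn_of_deriv_pos (convex_Icc _ _)
      (hc.mono (Set.Icc_subset_Icc le_rfl hθ.2))
    intro x hx
    rw [interior_Icc] at hx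
    have hx0 : 0 < x := hx.1
    have hx1 : x < 1 := lt_of_lt_of_le hx.2 hθ.2
    rw [(hasDerivAt_q hα hx0 hx1).deriv, deriv_q_eq_sign hα hx0 hx1]
    have hB : 0 < 1 + (α - 1) * x := Bpos hα hx0.le hx1.le
    have hA : 0 < 1 + α * x := Apos hα hx0.le
    have hr := hrpos x hx0 hx.2
    positivity
  -- q is strictly antitone on [θ, 1]
  have hanti : StrictAntiOn (q α) (Set.Icc θ 1) := by
    apply strictAntiOn_of_deriv_neg (convex_Icc _ _)
      (hc.mono (Set.Icc_subset_Icc hθ.1 le_rfl))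
    intro x hx
    rw [interior_Icc] at hx
    have hx0 : 0 < x := lt_of_le_of_lt hθ.1 hx.1
    have hx1 : x < 1 := hx.2
    rw [(hasDerivAt_q hα hx0 hx1).deriv, deriv_q_eq_sign hα hx0 hx1]
    have hB : 0 < 1 + (α - 1) * x := Bpos hα hx0.le hx1.le
    have hA : 0 < 1 + α * x := Apos hα hx0.le
    have hr := hrneg x hx.1 hx.2
    have hden : 0 < (1 + α * x) ^ 2 * (1 + (α - 1) * x) ^ 2 := by positivity
    exact div_neg_of_neg_of_pos (by nlinarith) hden
  -- q > 0 on (0, θ]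
  have hposθ : ∀ t, 0 < t → t ≤ θ → 0 < q α t := by
    intro t ht0 htθ
    have h0 : (0:ℝ) ∈ Set.Icc (0:ℝ) θ := ⟨le_rfl, le_trans ht0.le htθ⟩
    have ht : t ∈ Set.Icc (0:ℝ) θ := ⟨ht0.le, htθ⟩
    have := hmono h0 ht ht0
    rwa [q_zero] at this
  rcases le_or_gt 0 (q α 1) with hq1 | hq1
  · refine ⟨1, Set.right_mem_Icc.2 (by norm_num), ?_, ?_⟩
    · intro t ht0 ht1
      rcases le_or_gt t θ with h | h
      · exact (hposθ t ht0 h).le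
      · have h1 : t ∈ Set.Icc θ 1 := ⟨h.le, ht1⟩
        have h2 : (1:ℝ) ∈ Set.Icc θ 1 := Set.right_mem_Icc.2 hθ.2
        rcases eq_or_lt_of_le ht1 with rfl | hlt
        · exact hq1
        · exact le_trans hq1 (hanti h1 h2 hlt).le
    · intro t h1 h2; linarith
  · -- find the root by IVT on [θ, 1]
    have hqθ : 0 ≤ q α θ := by
      rcases eq_or_lt_of_le hθ.1 with rfl | h
      · rw [q_zero]
      · exact (hposθ θ h le_rfl).le
    have hivt := intermediate_value_Icc' hθ.2
      (hc.mono (Set.Icc_subset_Icc hθ.1 le_rfl))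
    have h0mem : (0:ℝ) ∈ Set.Icc (q α 1) (q α θ) := ⟨hq1.le, hqθ⟩
    obtain ⟨d, hd, hqd⟩ := hivt h0mem
    refine ⟨d, ⟨le_trans hθ.1 hd.1, hd.2⟩, ?_, ?_⟩
    · intro t ht0 htd
      rcases le_or_gt t θ with h | h
      · exact (hposθ t ht0 h).le
      · have h1 : t ∈ Set.Icc θ 1 := ⟨h.le, le_trans htd hd.2⟩
        rcases eq_or_lt_of_le htd with rfl | hlt
        · exact le_of_eq hqd.symm
        · have := hanti h1 hd hlt
          rw [hqd] at this
          exact this.le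
    · intro t htd ht1
      have h1 : t ∈ Set.Icc θ 1 := ⟨le_trans hd.1 htd.le, ht1⟩
      have := hanti hd h1 htd
      rw [hqd] at this
      exact this.le

lemma hasDerivAt_f {α t : ℝ} (hα : 0 < α) (ht0 : 0 < t) (ht1 : t < 1) :
    HasDerivAt (f α) (q α t / t ^ 2) t := by
  have hB : 0 < 1 + (α - 1) * t := Bpos hα ht0.le ht1.le
  have hA : 0 < 1 + α * t := Apos hα ht0.le
  have hBd : HasDerivAt (fun s : ℝ => 1 + (α - 1) * s) (α - 1) t := by
    simpa using ((hasDerivAt_id t).const_mul (α - 1)).const_add 1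
  have hAd : HasDerivAt (fun s : ℝ => 1 + α * s) α t := by
    simpa using ((hasDerivAt_id t).const_mul α).const_add 1
  have hlogB : HasDerivAt (fun s : ℝ => Real.log (1 + (α - 1) * s))
      ((α - 1) / (1 + (α - 1) * t)) t := hBd.log hB.ne'
  have hlogA : HasDerivAt (fun s : ℝ => Real.log (1 + α * s))
      (α / (1 + α * t)) t := hAd.log hA.ne'
  have hmain := (hlogB.sub hlogA).div (hasDerivAt_id t) ht0.ne'
  refine hmain.congr_deriv ?_
  simp only [q, id_eq, Pi.sub_apply]
  ring

lemma continuousOn_f {α M : ℝ} (hα : 0 < α) (hM0 : 0 < M) :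
    ContinuousOn (f α) (Set.Icc M 1) := by
  have hsub : Set.Icc M 1 ⊆ Set.Icc 0 1 := Set.Icc_subset_Icc hM0.le le_rfl
  have hBne : ∀ t ∈ Set.Icc M 1, 1 + (α - 1) * t ≠ 0 := fun t ht =>
    (Bpos hα (hsub ht).1 (hsub ht).2).ne'
  have hAne : ∀ t ∈ Set.Icc M 1, 1 + α * t ≠ 0 := fun t ht =>
    (Apos hα (hsub ht).1).ne'
  have hBc : ContinuousOn (fun t : ℝ => 1 + (α - 1) * t) (Set.Icc M 1) :=
    (continuous_const.add (continuous_const.mul continuous_id)).continuousOn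
  have hAc : ContinuousOn (fun t : ℝ => 1 + α * t) (Set.Icc M 1) :=
    (continuous_const.add (continuous_const.mul continuous_id)).continuousOn
  exact ((hBc.log hBne).sub (hAc.log hAne)).div continuousOn_id
    (fun t ht => (lt_of_lt_of_le hM0 ht.1).ne')

end PhiEndpointAux

theorem Phi_min_on_Icc_attained_at_endpoints (α : ℝ) (hα : α ∈ Set.Ioi (0:ℝ))
    (M : ℝ) (hM : M ∈ Set.Ioc (0:ℝ) 1) :
    IsLeast ((fun t => Phi t (α * t)) '' Set.Icc M 1) (min (Phi M (α * M)) (Phi 1 α)) := by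
  have hα : 0 < α := hα
  obtain ⟨hM0, hM1⟩ := hM
  obtain ⟨d, hd, hqpos, hqneg⟩ := PhiEndpointAux.q_sign hα
  set c : ℝ := max M d with hc
  have hcMem : c ∈ Set.Icc M 1 := ⟨le_max_left _ _, max_le hM1 hd.2⟩
  -- f is monotone on [M, c]
  have hmono : MonotoneOn (PhiEndpointAux.f α) (Set.Icc M c) := by
    apply monotoneOn_of_deriv_nonneg (convex_Icc _ _)
      ((PhiEndpointAux.continuousOn_f hα hM0).mono (Set.Icc_subset_Icc le_rfl hcMem.2))
    · intro x hx
      rw [interior_Icc] at hx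
      have hx0 : 0 < x := lt_trans hM0 hx.1
      have hx1 : x < 1 := lt_of_lt_of_le hx.2 hcMem.2
      exact (PhiEndpointAux.hasDerivAt_f hα hx0 hx1).differentiableAt.differentiableWithinAt
    · intro x hx
      rw [interior_Icc] at hx
      have hx0 : 0 < x := lt_trans hM0 hx.1
      have hx1 : x < 1 := lt_of_lt_of_le hx.2 hcMem.2
      rw [(PhiEndpointAux.hasDerivAt_f hα hx0 hx1).deriv]
      have hxd : x ≤ d := by
        have h2 : x < max M d := hx.2
        rcases lt_max_iff.mp h2 with h | h
        · exact absurd h (not_lt.2 hx.1.le)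
        · exact h.le
      have := hqpos x hx0 hxd
      positivity
  -- f is antitone on [c, 1]
  have hanti : AntitoneOn (PhiEndpointAux.f α) (Set.Icc c 1) := by
    apply antitoneOn_of_deriv_nonpos (convex_Icc _ _)
      ((PhiEndpointAux.continuousOn_f hα hM0).mono (Set.Icc_subset_Icc hcMem.1 le_rfl))
    · intro x hx
      rw [interior_Icc] at hx
      have hx0 : 0 < x := lt_of_lt_of_le hM0 (le_trans hcMem.1 hx.1.le)
      exact (PhiEndpointAux.hasDerivAt_f hα hx0 hx.2).differentiableAt.differentiableWithinAt
    · intro x hx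
      rw [interior_Icc] at hx
      have hx0 : 0 < x := lt_of_lt_of_le hM0 (le_trans hcMem.1 hx.1.le)
      have hx1 : x < 1 := hx.2
      rw [(PhiEndpointAux.hasDerivAt_f hα hx0 hx1).deriv]
      have hxd : d < x := lt_of_le_of_lt (le_max_right M d) hx.1
      have hq := hqneg x hxd hx1.le
      have ht2 : (0:ℝ) < x ^ 2 := by positivity
      exact div_nonpos_of_nonpos_of_nonneg hq ht2.le
  -- rewrite Phi as f on the set
  have hPhiM : Phi M (α * M) = PhiEndpointAux.f α M := PhiEndpointAux.phi_eq hα hM0 hM1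
  have hPhi1 : Phi 1 (α * 1) = PhiEndpointAux.f α 1 := PhiEndpointAux.phi_eq hα one_pos le_rfl
  constructor
  · rcases min_cases (Phi M (α * M)) (Phi 1 α) with ⟨h1, _⟩ | ⟨h1, _⟩
    · exact ⟨M, Set.left_mem_Icc.2 hM1, h1.symm⟩
    · refine ⟨1, Set.right_mem_Icc.2 hM1, ?_⟩
      show Phi 1 (α * 1) = _
      rw [mul_one]
      exact h1.symm
  · rintro y ⟨t, ht, rfl⟩
    have ht0 : 0 < t := lt_of_lt_of_le hM0 ht.1
    have hPhit : Phi t (α * t) = PhiEndpointAux.f α t := PhiEndpointAux.phi_eq hα ht0 ht.2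
    show min (Phi M (α * M)) (Phi 1 α) ≤ Phi t (α * t)
    rw [hPhit]
    rcases le_total t c with h | h
    · have h1 : PhiEndpointAux.f α M ≤ PhiEndpointAux.f α t :=
        hmono (Set.left_mem_Icc.2 hcMem.1) ⟨ht.1, h⟩ ht.1
      calc min (Phi M (α * M)) (Phi 1 α) ≤ Phi M (α * M) := min_le_left _ _
        _ = PhiEndpointAux.f α M := hPhiM
        _ ≤ PhiEndpointAux.f α t := h1
    · have h1 : PhiEndpointAux.f α 1 ≤ PhiEndpointAux.f α t :=
        hanti ⟨h, ht.2⟩ (Set.right_mem_Icc.2 hcMem.2) ht.2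
      calc min (Phi M (α * M)) (Phi 1 α) ≤ Phi 1 α := min_le_right _ _
        _ = Phi 1 (α * 1) := by rw [mul_one]
        _ = PhiEndpointAux.f α 1 := hPhi1
        _ ≤ PhiEndpointAux.f α t := h1
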